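/- If S ∈ ℚ[[t₃]] satisfies 1 − S + t₃ S³ = 0, then the coefficient of t₃ⁿ in S is the Fuss–Catalan number (3n)!/((2n+1)! n!). -/

import Mathlib

open PowerSeries

/-- If `S ∈ ℚ[[t]]` satisfies `1 − S + t·S³ = 0`, then the `n`-th coefficient of `S`
is the Fuss–Catalan number `(3n)! / ((2n+1)!·n!)`. -/
theorem stmt_16 (S : PowerSeries ℚ) (h : 1 - S + PowerSeries.X * S ^ 3 = 0) (n : ℕ) :
    PowerSeries.coeff n S =
      (Nat.factorial (3 * n) : ℚ) /
        ((Nat.factorial (2 * n + 1) : ℚ) * (Nat.factorial n : ℚ)) := by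
  set D := PowerSeries.derivative ℚ with hD
  set S' := D S with hS'
  set S'' := D S' with hS''
  have h3 : D (3 : ℚ⟦X⟧) = 0 := by
    rw [show (3:ℚ⟦X⟧) = ((3:ℕ) : ℚ⟦X⟧) by norm_num]; exact Derivation.map_natCast D 3
  have h1 : S ^ 3 + 3 * X * S ^ 2 * S' - S' = 0 := by
    have hd := congrArg (⇑D) h
    simp only [map_add, map_sub, Derivation.map_one_eq_zero, Derivation.leibniz,
      Derivation.leibniz_pow, derivative_X, smul_eq_mul, map_zero, hD] at hd
    linear_combination hd
  have h2 : 6 * S ^ 2 * S' + 6 * X * S * S' ^ 2 + 3 * X * S ^ 2 * S'' - S'' = 0 := by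
    have hd := congrArg (⇑D) h1
    simp only [map_add, map_sub, Derivation.map_one_eq_zero, Derivation.leibniz,
      Derivation.leibniz_pow, derivative_X, smul_eq_mul, map_zero, hD, h3] at hd
    rw [hD] at h3; simp only [h3] at hd
    linear_combination hd
  have hU : (1 - 3 * X * S ^ 2) *
      (X * (4 - 27 * X) * S'' + (6 - 54 * X) * S' - 6 * S) = 0 := by
    linear_combination
      (-6*S - 6*S^2 - 36*X*S' - 30*X*S*S' - 36*X^2*S'^2 - 54*X^2*S^2*S' - 162*X^3*S*S'^2) * h
      + (-6 + 18*X + 6*X*S + 6*X*S^2 - 36*X^2*S' + 12*X^2*S*S' + 54*X^3*S^2*S') * h1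
      + (-4*X + 27*X^2) * h2
  have hUne : (1 - 3 * X * S ^ 2 : ℚ⟦X⟧) ≠ 0 := by
    intro hc
    have := congrArg (⇑(coeff 0)) hc
    simp [coeff_zero_eq_constantCoeff] at this
  have hG : X * (4 - 27 * X) * S'' + (6 - 54 * X) * S' - 6 * S = 0 :=
    (mul_eq_zero.mp hU).resolve_left hUne
  -- coefficient recurrence
  have hrec : ∀ k : ℕ,
      2*(k+1)*(2*(k:ℚ)+3) * coeff (k+1) S = 3*(3*k+1)*(3*k+2) * coeff k S := by
    have hG' : (4:ℚ) • (X * S'') - (27:ℚ) • (X * (X * S'')) + (6:ℚ) • S'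
        - (54:ℚ) • (X * S') - (6:ℚ) • S = 0 := by
      rw [smul_eq_C_mul, smul_eq_C_mul, smul_eq_C_mul, smul_eq_C_mul, smul_eq_C_mul]
      simp only [map_ofNat]
      linear_combination hG
    have key : ∀ k : ℕ, (4:ℚ) * coeff k (X * S'') - 27 * coeff k (X * (X * S''))
        + 6 * coeff k S' - 54 * coeff k (X * S') - 6 * coeff k S = 0 := by
      intro k
      have := congrArg (⇑(coeff k)) hG'
      simpa [smul_eq_mul] using this
    intro k
    match k with
    | 0 =>
      have h0 := key 0
      simp [coeff_zero_X_mul, hS', hS'', coeff_derivative, coeff_zero_eq_constantCoeff,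
        hD] at h0 ⊢
      linarith
    | 1 =>
      have h0 := key 1
      simp [coeff_succ_X_mul, coeff_zero_X_mul, hS', hS'', coeff_derivative, hD] at h0 ⊢
      linarith
    | (m+2) =>
      have h0 := key (m+2)
      rw [coeff_succ_X_mul, coeff_succ_X_mul, show m+2 = (m+1)+1 from rfl, coeff_succ_X_mul,
        coeff_succ_X_mul] at h0
      simp only [hS', hS'', coeff_derivative, hD] at h0
      push_cast at h0 ⊢
      ring_nf at h0 ⊢
      linarith
  have ha0 : coeff 0 S = 1 := by
    have := congrArg (⇑(coeff 0)) h
    simp [coeff_zero_eq_constantCoeff] at this ⊢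
    linarith
  -- final induction
  clear h1 h2 hU hUne hG h
  induction n with
  | zero => simpa using ha0
  | succ n ih =>
    have hr := hrec n
    have hden : (2*((n:ℚ)+1)*(2*(n:ℚ)+3)) ≠ 0 := by positivity
    have e3 : ((3*(n+1)).factorial : ℚ)
        = (3*(n:ℚ)+3)*((3*n+2)*((3*n+1)*((3*n).factorial : ℚ))) := by
      have : 3*(n+1) = (3*n)+1+1+1 := by ring
      rw [this]
      push_cast [Nat.factorial_succ]
      ring
    have e2 : ((2*(n+1)+1).factorial : ℚ)
        = (2*(n:ℚ)+3)*((2*n+2)*(((2*n+1)).factorial : ℚ)) := by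
      have : 2*(n+1)+1 = (2*n+1)+1+1 := by ring
      rw [this]
      push_cast [Nat.factorial_succ]
      ring
    have e1 : (((n+1)).factorial : ℚ) = ((n:ℚ)+1)*((n).factorial : ℚ) := by
      push_cast [Nat.factorial_succ]; ring
    rw [e3, e2, e1]
    have f1 : ((3*n).factorial : ℚ) ≠ 0 := Nat.cast_ne_zero.mpr (Nat.factorial_ne_zero _)
    have f2 : ((2*n+1).factorial : ℚ) ≠ 0 := Nat.cast_ne_zero.mpr (Nat.factorial_ne_zero _)
    have f3 : ((n).factorial : ℚ) ≠ 0 := Nat.cast_ne_zero.mpr (Nat.factorial_ne_zero _)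
    have hcoef : coeff (n+1) S
        = 3*(3*(n:ℚ)+1)*(3*n+2) * coeff n S / (2*((n:ℚ)+1)*(2*(n:ℚ)+3)) := by
      field_simp
      linear_combination hr
    rw [hcoef, ih]
    field_simp
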